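/- Let F be a real inner product space, X a set, φ : X → F a feature map, and x_1, …, x_M ∈ X training inputs. Let C : ℝ^M → ℝ be any cost function of the model outputs and let g : ℝ → ℝ be strictly monotonically increasing on [0, ∞). Define the regularized objective J(w) = C(⟪w, φ(x_1)⟫, …, ⟪w, φ(x_M)⟫) + g(‖w‖) for w ∈ F. If w* ∈ F minimizes J over F (i.e., J(w*) ≤ J(w) for all w ∈ F), then w* lies in the linear span of {φ(x_1), …, φ(x_M)}; consequently there exist real coefficients α_1, …, α_M such that for every x ∈ X, ⟪w*, φ(x)⟫ = Σ_{m=1}^M α_m · ⟪φ(x_m), φ(x)⟫. -/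

import Mathlib

/-- Representer theorem in feature-space form: a minimizer of a regularized empirical
risk (with strictly increasing norm regularizer) lies in the span of the feature vectors
of the training data, and its model admits a kernel expansion. -/
theorem representer_theorem {X : Type*} {F : Type*} [NormedAddCommGroup F]
    [InnerProductSpace ℝ F] {M : ℕ} (φ : X → F) (x : Fin M → X)
    (C : (Fin M → ℝ) → ℝ) (g : ℝ → ℝ) (hg : StrictMonoOn g (Set.Ici 0))
    (J : F → ℝ)
    (hJ : ∀ w : F, J w = C (fun m => (inner ℝ w (φ (x m)) : ℝ)) + g ‖w‖)
    (wstar : F) (hmin : ∀ w : F, J wstar ≤ J w) :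
    wstar ∈ Submodule.span ℝ (Set.range (fun m => φ (x m))) ∧
    ∃ α : Fin M → ℝ, ∀ x' : X,
      (inner ℝ wstar (φ x') : ℝ) = ∑ m : Fin M, α m * (inner ℝ (φ (x m)) (φ x') : ℝ) := by
  set S : Submodule ℝ F := Submodule.span ℝ (Set.range (fun m => φ (x m))) with hS
  haveI : FiniteDimensional ℝ S := by
    apply FiniteDimensional.span_of_finite
    exact Set.finite_range _
  haveI : CompleteSpace S := FiniteDimensional.complete ℝ S
  set v : F := (S.orthogonalProjectionOnto wstar : F) with hv
  have hvS : v ∈ S := (S.orthogonalProjectionOnto wstar).2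
  have hperp : wstar - v ∈ Sᗮ := by
    rw [hv, ← Submodule.starProjection_apply]; exact S.sub_starProjection_mem_orthogonal wstar
  -- inner products with elements of S agree
  have hinner : ∀ y ∈ S, (inner ℝ wstar y : ℝ) = inner ℝ v y := by
    intro y hy
    have h0 : (inner ℝ (wstar - v) y : ℝ) = 0 := by
      have := hperp y hy
      rwa [real_inner_comm] at this
    have : (inner ℝ wstar y : ℝ) - inner ℝ v y = 0 := by
      rw [← inner_sub_left]; exact h0
    linarith
  have hφmem : ∀ m : Fin M, φ (x m) ∈ S := fun m =>
    Submodule.subset_span ⟨m, rfl⟩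
  -- Pythagoras
  have hpyth : ‖wstar‖ ^ 2 = ‖v‖ ^ 2 + ‖wstar - v‖ ^ 2 := by
    have h0 : (inner ℝ v (wstar - v) : ℝ) = 0 := hperp v hvS
    have := norm_add_sq_real v (wstar - v)
    simp only [add_sub_cancel, h0, mul_zero, add_zero] at this
    linarith
  have hnormle : ‖v‖ ≤ ‖wstar‖ := by
    nlinarith [sq_nonneg ‖wstar - v‖, norm_nonneg v, norm_nonneg wstar]
  -- compare J values
  have hCeq : C (fun m => (inner ℝ wstar (φ (x m)) : ℝ))
      = C (fun m => (inner ℝ v (φ (x m)) : ℝ)) := by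
    congr 1; funext m; exact hinner _ (hφmem m)
  have hJle : J wstar ≤ J v := hmin v
  have hgeq : g ‖wstar‖ = g ‖v‖ := by
    have h1 : g ‖wstar‖ ≤ g ‖v‖ := by
      have := hJle
      rw [hJ wstar, hJ v, hCeq] at this
      linarith
    have h2 : g ‖v‖ ≤ g ‖wstar‖ :=
      hg.monotoneOn (Set.mem_Ici.2 (norm_nonneg v))
        (Set.mem_Ici.2 (norm_nonneg wstar)) hnormle
    linarith
  have hnormeq : ‖wstar‖ = ‖v‖ :=
    (hg.injOn (Set.mem_Ici.2 (norm_nonneg wstar))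
      (Set.mem_Ici.2 (norm_nonneg v)) hgeq)
  have hwv : wstar = v := by
    have : ‖wstar - v‖ ^ 2 = 0 := by rw [hnormeq] at hpyth; linarith
    have : ‖wstar - v‖ = 0 := by nlinarith [norm_nonneg (wstar - v)]
    exact sub_eq_zero.mp (norm_eq_zero.mp this)
  have hwmem : wstar ∈ S := hwv ▸ hvS
  refine ⟨hwmem, ?_⟩
  obtain ⟨α, hα⟩ := (Finsupp.mem_span_range_iff_exists_finsupp).1 hwmem
  refine ⟨fun m => α m, fun x' => ?_⟩
  rw [← hα]
  rw [Finsupp.sum_fintype]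
  · rw [sum_inner]
    apply Finset.sum_congr rfl
    intro m _
    rw [real_inner_smul_left]
  · intro i; simp
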